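/- Let (H, t) be a half-ribbon Hopf algebra over a field F, with universal R-matrix R = (t⁻¹ ⊗ t⁻¹)·Δ(t), and let u = m∘(S ⊗ id)(τ(R)) be the Drinfeld element. Then u = S(t⁻¹)·t⁻¹. -/

import Mathlib

open TensorProduct

section HalfRibbonDefs

variable (F : Type*) [Field F] (H : Type*) [Ring H] [HopfAlgebra F H]

/-- Comultiplication as an algebra homomorphism. -/
noncomputable abbrev Δ : H →ₐ[F] H ⊗[F] H := Bialgebra.comulAlgHom F H

/-- Counit as an algebra homomorphism. -/
noncomputable abbrev ε : H →ₐ[F] F := Bialgebra.counitAlgHom F H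

/-- Antipode. -/
noncomputable abbrev antipodeS : H →ₗ[F] H := HopfAlgebra.antipode (R := F)

/-- The flip `a ⊗ b ↦ b ⊗ a` as an algebra automorphism of `H ⊗ H`. -/
noncomputable abbrev τ : H ⊗[F] H ≃ₐ[F] H ⊗[F] H := Algebra.TensorProduct.comm F H H

/-- The map `m ∘ (S ⊗ id) : H ⊗ H → H`, `a ⊗ b ↦ S(a)·b`, applied after flipping.
`drinfeld R = m∘(S ⊗ id)(τ(R))` is the Drinfeld element. -/
noncomputable def drinfeld (R : H ⊗[F] H) : H :=
  LinearMap.mul' F H ((TensorProduct.map (antipodeS F H) LinearMap.id) (τ F H R))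

/-- `R ∈ H ⊗ H` is a universal R-matrix. -/
def IsUniversalRMatrix (R : H ⊗[F] H) : Prop :=
  IsUnit R ∧
  (∀ x : H, R * Δ F H x = τ F H (Δ F H x) * R) ∧
  (Algebra.TensorProduct.map (Δ F H) (AlgHom.id F H)) R
    = (Algebra.TensorProduct.map (Algebra.TensorProduct.includeLeft (R := F) (S := F)) (AlgHom.id F H)) R
      * (Algebra.TensorProduct.map (Algebra.TensorProduct.includeRight (R := F) (A := H) (B := H)) (AlgHom.id F H)) R ∧
  (Algebra.TensorProduct.map (AlgHom.id F H) (Δ F H)) R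
    = (Algebra.TensorProduct.map (AlgHom.id F H) (Algebra.TensorProduct.includeRight (R := F) (A := H) (B := H))) R
      * (Algebra.TensorProduct.map (AlgHom.id F H) (Algebra.TensorProduct.includeLeft (R := F) (S := F))) R ∧
  (Algebra.TensorProduct.lid F H) ((Algebra.TensorProduct.map (ε F H) (AlgHom.id F H)) R) = 1 ∧
  (Algebra.TensorProduct.rid F F H) ((Algebra.TensorProduct.map (AlgHom.id F H) (ε F H)) R) = 1

/-- `v` is a ribbon element for the quasi-triangular Hopf algebra `(H, R)`. -/
def IsRibbonElement (R : H ⊗[F] H) (v : H) : Prop :=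
  IsUnit v ∧
  (∀ x : H, v * x = x * v) ∧
  v * v = drinfeld F H R * antipodeS F H (drinfeld F H R) ∧
  antipodeS F H v = v ∧
  ε F H v = 1 ∧
  Δ F H v = (v ⊗ₜ[F] v) * Ring.inverse (τ F H R * R)

/-- `(H, t)` is a half-ribbon Hopf algebra:  `R := (t⁻¹ ⊗ t⁻¹)·Δ(t)` is a universal
R-matrix and `v := t⁻²` is a ribbon element for `(H, R)`. -/
def IsHalfRibbonElement (t : Hˣ) : Prop :=
  IsUniversalRMatrix F H ((((t⁻¹ : Hˣ) : H) ⊗ₜ[F] ((t⁻¹ : Hˣ) : H)) * Δ F H (t : H)) ∧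
  IsRibbonElement F H ((((t⁻¹ : Hˣ) : H) ⊗ₜ[F] ((t⁻¹ : Hˣ) : H)) * Δ F H (t : H))
    (((t⁻¹ : Hˣ) : H) * ((t⁻¹ : Hˣ) : H))

end HalfRibbonDefs

/-! ### Auxiliary development: the antipode is an anti-homomorphism, and consequences. -/

namespace HRAux

open Coalgebra HopfAlgebra

variable {F : Type*} [Field F] {H : Type*} [Ring H] [HopfAlgebra F H]

lemma counit_smul_left_sum {ι : Type*} {a : H} (r : Coalgebra.Repr F a ι) :
    ∑ i ∈ r.index, counit (R := F) (r.right i) • r.left i = a := by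
  have h := congrArg (TensorProduct.rid F H) (sum_tmul_counit_eq r)
  rw [map_sum] at h
  simp only [TensorProduct.rid_tmul, one_smul] at h
  exact h

lemma counit_smul_right_sum {ι : Type*} {a : H} (r : Coalgebra.Repr F a ι) :
    ∑ i ∈ r.index, counit (R := F) (r.left i) • r.right i = a := by
  have h := congrArg (TensorProduct.lid F H) (sum_counit_tmul_eq r)
  rw [map_sum] at h
  simp only [TensorProduct.lid_tmul, one_smul] at h
  exact h

/-- The product of two representations represents the product. -/
noncomputable def mulRepr {ι₁ ι₂ : Type*} {a b : H} (r1 : Coalgebra.Repr F a ι₁) (r2 : Coalgebra.Repr F b ι₂) :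
    Coalgebra.Repr F (a * b) (ι₁ × ι₂) where
  index := r1.index ×ˢ r2.index
  left p := r1.left p.1 * r2.left p.2
  right p := r1.right p.1 * r2.right p.2
  eq := by
    rw [Finset.sum_product, Bialgebra.comul_mul, ← r1.eq, ← r2.eq, Finset.sum_mul_sum]
    simp [Algebra.TensorProduct.tmul_mul_tmul]

lemma sum_mul_antipode_mul (c : H) {ι : Type*} {x : H} (r : Coalgebra.Repr F x ι) :
    ∑ i ∈ r.index, r.left i * (antipodeS F H (r.right i) * c) = counit (R := F) x • c := by
  simp only [← mul_assoc]
  rw [← Finset.sum_mul, sum_mul_antipode_eq_algebraMap_counit, ← Algebra.smul_def]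

lemma sum_antipode_mul_mul (c : H) {ι : Type*} {x : H} (r : Coalgebra.Repr F x ι) :
    ∑ i ∈ r.index, antipodeS F H (r.left i) * (r.right i * c) = counit (R := F) x • c := by
  simp only [← mul_assoc]
  rw [← Finset.sum_mul, sum_antipode_mul_eq_algebraMap_counit, ← Algebra.smul_def]

lemma repr_reassoc {X : Type*} [AddCommMonoid X] [Module F X]
    (β : H ⊗[F] (H ⊗[F] H) →ₗ[F] X) {ι κ Λ : Type*} {a : H} (r : Coalgebra.Repr F a ι)
    (r1 : ∀ i : ι, Coalgebra.Repr F (r.left i) κ)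
    (r2 : ∀ i : ι, Coalgebra.Repr F (r.right i) Λ) :
    ∑ i ∈ r.index, ∑ j ∈ (r1 i).index,
      β ((r1 i).left j ⊗ₜ[F] ((r1 i).right j ⊗ₜ[F] r.right i))
    = ∑ i ∈ r.index, ∑ j ∈ (r2 i).index,
      β (r.left i ⊗ₜ[F] ((r2 i).left j ⊗ₜ[F] (r2 i).right j)) := by
  have h2 := congrArg β (Coalgebra.sum_tmul_tmul_eq r r1 r2)
  simpa [map_sum] using h2

lemma sum4_comm {ι₁ ι₂ ι₃ ι₄ : Type*} {X : Type*} [AddCommMonoid X]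
    (s : Finset ι₁) (t : ι₁ → Finset ι₂) (u : Finset ι₃) (v : ι₃ → Finset ι₄)
    (f : ι₁ → ι₂ → ι₃ → ι₄ → X) :
    ∑ i ∈ s, ∑ k ∈ t i, ∑ j ∈ u, ∑ l ∈ v j, f i k j l
      = ∑ j ∈ u, ∑ l ∈ v j, ∑ i ∈ s, ∑ k ∈ t i, f i k j l := by
  calc ∑ i ∈ s, ∑ k ∈ t i, ∑ j ∈ u, ∑ l ∈ v j, f i k j l
      = ∑ i ∈ s, ∑ j ∈ u, ∑ k ∈ t i, ∑ l ∈ v j, f i k j l :=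
        Finset.sum_congr rfl fun i _ => Finset.sum_comm
    _ = ∑ j ∈ u, ∑ i ∈ s, ∑ k ∈ t i, ∑ l ∈ v j, f i k j l := Finset.sum_comm
    _ = ∑ j ∈ u, ∑ i ∈ s, ∑ l ∈ v j, ∑ k ∈ t i, f i k j l :=
        Finset.sum_congr rfl fun j _ => Finset.sum_congr rfl fun i _ => Finset.sum_comm
    _ = ∑ j ∈ u, ∑ l ∈ v j, ∑ i ∈ s, ∑ k ∈ t i, f i k j l :=
        Finset.sum_congr rfl fun j _ => Finset.sum_comm

variable (F)

/-- Auxiliary linear map `x ⊗ (y ⊗ z) ↦ S(x·B) · (y · (C · (S(D) · S(z))))`. -/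
noncomputable def LA (B C D : H) : H ⊗[F] (H ⊗[F] H) →ₗ[F] H :=
  LinearMap.mul' F H ∘ₗ TensorProduct.map (antipodeS F H ∘ₗ LinearMap.mulRight F B)
    (LinearMap.mul' F H ∘ₗ TensorProduct.map LinearMap.id
      (LinearMap.mulLeft F C ∘ₗ LinearMap.mulLeft F (antipodeS F H D) ∘ₗ antipodeS F H))

@[simp] lemma LA_apply (B C D x y z : H) :
    LA F B C D (x ⊗ₜ[F] (y ⊗ₜ[F] z))
      = antipodeS F H (x * B) * (y * (C * (antipodeS F H D * antipodeS F H z))) := by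
  simp [LA]

/-- Auxiliary linear map `x ⊗ (y ⊗ z) ↦ S(P·x) · (Q · (y · (S(z) · c)))`. -/
noncomputable def LB (P Q c : H) : H ⊗[F] (H ⊗[F] H) →ₗ[F] H :=
  LinearMap.mul' F H ∘ₗ TensorProduct.map (antipodeS F H ∘ₗ LinearMap.mulLeft F P)
    (LinearMap.mulLeft F Q ∘ₗ LinearMap.mul' F H ∘ₗ TensorProduct.map LinearMap.id
      (LinearMap.mulRight F c ∘ₗ antipodeS F H))

@[simp] lemma LB_apply (P Q c x y z : H) :
    LB F P Q c (x ⊗ₜ[F] (y ⊗ₜ[F] z))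
      = antipodeS F H (P * x) * (Q * (y * (antipodeS F H z * c))) := by
  simp [LB]

variable {F}

/-- The antipode is an anti-homomorphism. -/
theorem antipode_mul_rev (a b : H) :
    antipodeS F H (a * b) = antipodeS F H b * antipodeS F H a := by
  classical
  let ra : Coalgebra.Repr F a (H × H) := ℛ F a
  let rb : Coalgebra.Repr F b (H × H) := ℛ F b
  let ra1 : ∀ i : H × H, Coalgebra.Repr F (ra.left i) (H × H) := fun i => ℛ F _
  let ra2 : ∀ i : H × H, Coalgebra.Repr F (ra.right i) (H × H) := fun i => ℛ F _
  let rb1 : ∀ j : H × H, Coalgebra.Repr F (rb.left j) (H × H) := fun j => ℛ F _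
  let rb2 : ∀ j : H × H, Coalgebra.Repr F (rb.right j) (H × H) := fun j => ℛ F _
  have stepA : antipodeS F H (a * b)
      = ∑ i ∈ ra.index, ∑ k ∈ (ra2 i).index, ∑ j ∈ rb.index, ∑ l ∈ (rb2 j).index,
          antipodeS F H (ra.left i * rb.left j) *
            ((ra2 i).left k * ((rb2 j).left l *
              (antipodeS F H ((rb2 j).right l) * antipodeS F H ((ra2 i).right k)))) := by
    have h1 : ∀ i ∈ ra.index, ∀ k ∈ (ra2 i).index, ∀ j ∈ rb.index,
        (∑ l ∈ (rb2 j).index,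
          antipodeS F H (ra.left i * rb.left j) *
            ((ra2 i).left k * ((rb2 j).left l *
              (antipodeS F H ((rb2 j).right l) * antipodeS F H ((ra2 i).right k)))))
        = counit (R := F) (rb.right j) •
            (antipodeS F H (ra.left i * rb.left j) *
              ((ra2 i).left k * antipodeS F H ((ra2 i).right k))) := by
      intro i _ k _ j _
      rw [← Finset.mul_sum, ← Finset.mul_sum, sum_mul_antipode_mul _ (rb2 j),
        mul_smul_comm, mul_smul_comm]
    have h2 : ∀ i ∈ ra.index,
        (∑ k ∈ (ra2 i).index, ∑ j ∈ rb.index,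
          counit (R := F) (rb.right j) •
            (antipodeS F H (ra.left i * rb.left j) *
              ((ra2 i).left k * antipodeS F H ((ra2 i).right k))))
        = ∑ j ∈ rb.index, (counit (R := F) (ra.right i) * counit (R := F) (rb.right j)) •
            antipodeS F H (ra.left i * rb.left j) := by
      intro i _
      rw [Finset.sum_comm]
      refine Finset.sum_congr rfl fun j _ => ?_
      rw [← Finset.smul_sum, ← Finset.mul_sum, sum_mul_antipode_eq_algebraMap_counit (ra2 i),
        ← Algebra.commutes, ← Algebra.smul_def, smul_smul, mul_comm]
    calc antipodeS F H (a * b)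
        = antipodeS F H ((∑ i ∈ ra.index, counit (R := F) (ra.right i) • ra.left i) *
            (∑ j ∈ rb.index, counit (R := F) (rb.right j) • rb.left j)) := by
          rw [counit_smul_left_sum ra, counit_smul_left_sum rb]
      _ = ∑ i ∈ ra.index, ∑ j ∈ rb.index,
            (counit (R := F) (ra.right i) * counit (R := F) (rb.right j)) •
              antipodeS F H (ra.left i * rb.left j) := by
          rw [Finset.sum_mul_sum, map_sum]
          refine Finset.sum_congr rfl fun i _ => ?_
          rw [map_sum]
          refine Finset.sum_congr rfl fun j _ => ?_
          rw [smul_mul_smul_comm, map_smul]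
      _ = ∑ i ∈ ra.index, ∑ k ∈ (ra2 i).index, ∑ j ∈ rb.index, ∑ l ∈ (rb2 j).index,
            antipodeS F H (ra.left i * rb.left j) *
              ((ra2 i).left k * ((rb2 j).left l *
                (antipodeS F H ((rb2 j).right l) * antipodeS F H ((ra2 i).right k)))) := by
          refine Finset.sum_congr rfl fun i hi => ?_
          rw [← h2 i hi]
          refine Finset.sum_congr rfl fun k hk => Finset.sum_congr rfl fun j hj => ?_
          rw [h1 i hi k hk j hj]
  have reA : (∑ i ∈ ra.index, ∑ k ∈ (ra2 i).index, ∑ j ∈ rb.index, ∑ l ∈ (rb2 j).index,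
          antipodeS F H (ra.left i * rb.left j) *
            ((ra2 i).left k * ((rb2 j).left l *
              (antipodeS F H ((rb2 j).right l) * antipodeS F H ((ra2 i).right k)))))
      = ∑ i ∈ ra.index, ∑ k ∈ (ra1 i).index, ∑ j ∈ rb.index, ∑ l ∈ (rb2 j).index,
          antipodeS F H ((ra1 i).left k * rb.left j) *
            ((ra1 i).right k * ((rb2 j).left l *
              (antipodeS F H ((rb2 j).right l) * antipodeS F H (ra.right i)))) := by
    have h := repr_reassoc
      (β := ∑ j ∈ rb.index, ∑ l ∈ (rb2 j).index,
        LA F (rb.left j) ((rb2 j).left l) ((rb2 j).right l)) ra ra1 ra2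
    simp only [LinearMap.coe_sum, Finset.sum_apply, LA_apply] at h
    exact h.symm
  have reB : (∑ i ∈ ra.index, ∑ k ∈ (ra1 i).index, ∑ j ∈ rb.index, ∑ l ∈ (rb2 j).index,
          antipodeS F H ((ra1 i).left k * rb.left j) *
            ((ra1 i).right k * ((rb2 j).left l *
              (antipodeS F H ((rb2 j).right l) * antipodeS F H (ra.right i)))))
      = ∑ i ∈ ra.index, ∑ k ∈ (ra1 i).index, ∑ j ∈ rb.index, ∑ l ∈ (rb1 j).index,
          antipodeS F H ((ra1 i).left k * (rb1 j).left l) *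
            ((ra1 i).right k * ((rb1 j).right l *
              (antipodeS F H (rb.right j) * antipodeS F H (ra.right i)))) := by
    have h := repr_reassoc
      (β := ∑ i ∈ ra.index, ∑ k ∈ (ra1 i).index,
        LB F ((ra1 i).left k) ((ra1 i).right k) (antipodeS F H (ra.right i))) rb rb1 rb2
    simp only [LinearMap.coe_sum, Finset.sum_apply, LB_apply] at h
    refine (sum4_comm ra.index (fun i => (ra1 i).index) rb.index (fun j => (rb2 j).index)
      (fun i k j l => antipodeS F H ((ra1 i).left k * rb.left j) *
        ((ra1 i).right k * ((rb2 j).left l *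
          (antipodeS F H ((rb2 j).right l) * antipodeS F H (ra.right i)))))).trans ?_
    refine Eq.trans ?_ (sum4_comm rb.index (fun j => (rb1 j).index) ra.index
      (fun i => (ra1 i).index)
      (fun j l i k => antipodeS F H ((ra1 i).left k * (rb1 j).left l) *
        ((ra1 i).right k * ((rb1 j).right l *
          (antipodeS F H (rb.right j) * antipodeS F H (ra.right i))))))
    exact h.symm
  have stepB : (∑ i ∈ ra.index, ∑ k ∈ (ra1 i).index, ∑ j ∈ rb.index, ∑ l ∈ (rb1 j).index,
          antipodeS F H ((ra1 i).left k * (rb1 j).left l) *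
            ((ra1 i).right k * ((rb1 j).right l *
              (antipodeS F H (rb.right j) * antipodeS F H (ra.right i)))))
      = antipodeS F H b * antipodeS F H a := by
    have h3 : ∀ i ∈ ra.index, ∀ j ∈ rb.index,
        (∑ k ∈ (ra1 i).index, ∑ l ∈ (rb1 j).index,
          antipodeS F H ((ra1 i).left k * (rb1 j).left l) *
            ((ra1 i).right k * ((rb1 j).right l *
              (antipodeS F H (rb.right j) * antipodeS F H (ra.right i)))))
        = (counit (R := F) (ra.left i) * counit (R := F) (rb.left j)) •
            (antipodeS F H (rb.right j) * antipodeS F H (ra.right i)) := by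
      intro i _ j _
      have hmr := sum_antipode_mul_mul
        (antipodeS F H (rb.right j) * antipodeS F H (ra.right i)) (mulRepr (ra1 i) (rb1 j))
      rw [Bialgebra.counit_mul] at hmr
      rw [← hmr]
      rw [show (∑ p ∈ (mulRepr (ra1 i) (rb1 j)).index,
            antipodeS F H ((mulRepr (ra1 i) (rb1 j)).left p) *
              ((mulRepr (ra1 i) (rb1 j)).right p *
                (antipodeS F H (rb.right j) * antipodeS F H (ra.right i))))
          = ∑ k ∈ (ra1 i).index, ∑ l ∈ (rb1 j).index,
            antipodeS F H ((ra1 i).left k * (rb1 j).left l) *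
              (((ra1 i).right k * (rb1 j).right l) *
                (antipodeS F H (rb.right j) * antipodeS F H (ra.right i)))
        from Finset.sum_product ((ra1 i).index) ((rb1 j).index) _]
      refine Finset.sum_congr rfl fun k _ => Finset.sum_congr rfl fun l _ => ?_
      rw [mul_assoc ((ra1 i).right k)]
    calc (∑ i ∈ ra.index, ∑ k ∈ (ra1 i).index, ∑ j ∈ rb.index, ∑ l ∈ (rb1 j).index,
          antipodeS F H ((ra1 i).left k * (rb1 j).left l) *
            ((ra1 i).right k * ((rb1 j).right l *
              (antipodeS F H (rb.right j) * antipodeS F H (ra.right i)))))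
        = ∑ i ∈ ra.index, ∑ j ∈ rb.index, ∑ k ∈ (ra1 i).index, ∑ l ∈ (rb1 j).index,
          antipodeS F H ((ra1 i).left k * (rb1 j).left l) *
            ((ra1 i).right k * ((rb1 j).right l *
              (antipodeS F H (rb.right j) * antipodeS F H (ra.right i)))) :=
          Finset.sum_congr rfl fun i _ => Finset.sum_comm
      _ = ∑ i ∈ ra.index, ∑ j ∈ rb.index,
            (counit (R := F) (ra.left i) * counit (R := F) (rb.left j)) •
              (antipodeS F H (rb.right j) * antipodeS F H (ra.right i)) :=
          Finset.sum_congr rfl fun i hi => Finset.sum_congr rfl fun j hj => h3 i hi j hj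
      _ = antipodeS F H b * antipodeS F H a := by
          have hb' : ∑ j ∈ rb.index, counit (R := F) (rb.left j) • antipodeS F H (rb.right j)
              = antipodeS F H b := by
            simp only [← map_smul]
            rw [← map_sum, counit_smul_right_sum rb]
          have ha' : ∑ i ∈ ra.index, counit (R := F) (ra.left i) • antipodeS F H (ra.right i)
              = antipodeS F H a := by
            simp only [← map_smul]
            rw [← map_sum, counit_smul_right_sum ra]
          rw [← hb', ← ha', Finset.sum_mul_sum, Finset.sum_comm]
          refine Finset.sum_congr rfl fun j _ => Finset.sum_congr rfl fun i _ => ?_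
          rw [smul_mul_smul_comm, mul_comm (counit (R := F) (rb.left j))]
  rw [stepA, reA, reB, stepB]

/-- Key computation: `m∘(S⊗id)(Δ(x)·(c ⊗ 1)) = ε(x) • S(c)`. -/
lemma key_lemma (x c : H) :
    LinearMap.mul' F H (TensorProduct.map (antipodeS F H) LinearMap.id
        (Coalgebra.comul (R := F) x * (c ⊗ₜ[F] (1 : H))))
      = counit (R := F) x • antipodeS F H c := by
  let r : Coalgebra.Repr F x (H × H) := ℛ F x
  rw [← r.eq, Finset.sum_mul]
  simp only [Algebra.TensorProduct.tmul_mul_tmul, mul_one, map_sum, TensorProduct.map_tmul,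
    LinearMap.mul'_apply, LinearMap.id_coe, id_eq]
  calc ∑ i ∈ r.index, antipodeS F H (r.left i * c) * r.right i
      = ∑ i ∈ r.index, antipodeS F H c * (antipodeS F H (r.left i) * r.right i) := by
        refine Finset.sum_congr rfl fun i _ => ?_
        rw [antipode_mul_rev, mul_assoc]
    _ = antipodeS F H c * algebraMap F H (counit (R := F) x) := by
        rw [← Finset.mul_sum, sum_antipode_mul_eq_algebraMap_counit r]
    _ = counit (R := F) x • antipodeS F H c := by
        rw [← Algebra.commutes, ← Algebra.smul_def]

lemma mulSid_tmul_right (z : H ⊗[F] H) (c : H) :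
    LinearMap.mul' F H (TensorProduct.map (antipodeS F H) LinearMap.id (z * ((1 : H) ⊗ₜ[F] c)))
      = LinearMap.mul' F H (TensorProduct.map (antipodeS F H) LinearMap.id z) * c := by
  induction z using TensorProduct.induction_on with
  | zero => simp
  | tmul a b => simp [Algebra.TensorProduct.tmul_mul_tmul, mul_assoc]
  | add u v hu hv => simp only [add_mul, map_add, hu, hv]

lemma comm_comm (z : H ⊗[F] H) :
    (Algebra.TensorProduct.comm F H H) ((Algebra.TensorProduct.comm F H H) z) = z := by
  induction z using TensorProduct.induction_on with
  | zero => simp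
  | tmul a b => simp [Algebra.TensorProduct.comm_tmul]
  | add u v hu hv => rw [map_add, map_add, hu, hv]

end HRAux

/-- For a half-ribbon Hopf algebra `(H, t)` with
`R = (t⁻¹ ⊗ t⁻¹)·Δ(t)`, the Drinfeld element `u = m∘(S ⊗ id)(τ(R))` equals
`S(t⁻¹)·t⁻¹`. -/
theorem halfRibbon_drinfeld_eq
    (F : Type*) [Field F] (H : Type*) [Ring H] [HopfAlgebra F H]
    (t : Hˣ) (ht : IsHalfRibbonElement F H t) :
    drinfeld F H ((((t⁻¹ : Hˣ) : H) ⊗ₜ[F] ((t⁻¹ : Hˣ) : H)) * Δ F H (t : H)) =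
      antipodeS F H ((t⁻¹ : Hˣ) : H) * ((t⁻¹ : Hˣ) : H) := by
  classical
  open Coalgebra HopfAlgebra HRAux in
  obtain ⟨⟨-, hcomm, -, -, hcounit, -⟩, -⟩ := ht
  set Ti : H := ((t⁻¹ : Hˣ) : H) with hTidef
  set T : H := (t : H) with hTdef
  have hTTi : T * Ti = 1 := t.mul_inv
  have hTiT : Ti * T = 1 := t.inv_mul
  have hΔinv : Δ F H T * Δ F H Ti = 1 := by
    rw [← map_mul, hTTi, map_one]
  -- R commutes Δ(t) into the flipped comultiplication
  have h1 : (Ti ⊗ₜ[F] Ti) * Δ F H T = τ F H (Δ F H T) * (Ti ⊗ₜ[F] Ti) := by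
    have h := congrArg (· * Δ F H Ti) (hcomm T)
    simpa only [mul_assoc, hΔinv, mul_one] using h
  have hτR : τ F H ((Ti ⊗ₜ[F] Ti) * Δ F H T) = Δ F H T * (Ti ⊗ₜ[F] Ti) := by
    rw [h1, map_mul, HRAux.comm_comm, Algebra.TensorProduct.comm_tmul]
  -- counit of Ti is 1, in the sense that it acts trivially
  have hsmul1 : counit (R := F) Ti • (1 : H) = 1 := by
    have h := hcounit
    rw [map_mul] at h
    have hmapΔ : (Algebra.TensorProduct.map (ε F H) (AlgHom.id F H)) (Δ F H T)
        = ∑ i ∈ (ℛ F T).index,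
            counit (R := F) ((ℛ F T).left i) ⊗ₜ[F] ((ℛ F T).right i) := by
      have : (Δ F H T : H ⊗[F] H) = Coalgebra.comul (R := F) T := rfl
      rw [this, ← (ℛ F T).eq, map_sum]
      rfl
    rw [hmapΔ] at h
    simp only [Algebra.TensorProduct.map_tmul, map_mul, map_sum,
      Algebra.TensorProduct.lid_tmul] at h
    rw [HRAux.counit_smul_right_sum (ℛ F T)] at h
    rw [smul_mul_assoc] at h
    simp only [AlgHom.coe_id, id_eq] at h
    rw [hTiT] at h
    exact h
  have hact : ∀ x : H, counit (R := F) T • x = x := by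
    intro x
    have hF : counit (R := F) T * counit (R := F) Ti = 1 := by
      rw [← Bialgebra.counit_mul, hTTi, Bialgebra.counit_one]
    calc counit (R := F) T • x
        = counit (R := F) T • ((counit (R := F) Ti • (1 : H)) * x) := by
          rw [hsmul1, one_mul]
      _ = (counit (R := F) T * counit (R := F) Ti) • x := by
          rw [smul_mul_assoc, one_mul, smul_smul]
      _ = x := by rw [hF, one_smul]
  -- main computation
  rw [drinfeld, hτR]
  have hsplit : Δ F H T * (Ti ⊗ₜ[F] Ti)
      = (Δ F H T * (Ti ⊗ₜ[F] (1 : H))) * ((1 : H) ⊗ₜ[F] Ti) := by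
    rw [mul_assoc, Algebra.TensorProduct.tmul_mul_tmul, mul_one, one_mul]
  rw [hsplit, HRAux.mulSid_tmul_right]
  have : (Δ F H T : H ⊗[F] H) = Coalgebra.comul (R := F) T := rfl
  rw [this, HRAux.key_lemma, smul_mul_assoc, hact]
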